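/- For every finite set of formulas Σ₀ ⊆ L_μ, the closure Σ = Cl_{⋄̇, sub*, ¬}(Σ₀) — the least set containing Σ₀ and closed under applying ⋄̇, taking modified subformulas sub*, and negation — contains only finitely many formulas up to semantic equivalence over weakly transitive Kripke models (i.e., the quotient of Σ by the relation 'φ ≡ ψ iff ‖φ‖_M = ‖ψ‖_M for every weakly transitive Kripke model M' is finite). -/

import Mathlib

namespace TangledMu

/-- Formulas of the μ-calculus in negation normal form, with de Bruijn fixed-point
variables (`var`), propositional constants (`prop`/`nprop`), and "named" fresh
variables `x_{νx.φ}` / `x_{μx.φ}` (`fvar true φ` / `fvar false φ`) introduced by the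
modified subformula operator `sub*`, together with their negations (`nfvar`). -/
inductive MuForm (P : Type) : Type
  | tru : MuForm P
  | var : Nat → MuForm P
  | prop : P → MuForm P
  | nprop : P → MuForm P
  | fvar : Bool → MuForm P → MuForm P
  | nfvar : Bool → MuForm P → MuForm P
  | and : MuForm P → MuForm P → MuForm P
  | or : MuForm P → MuForm P → MuForm P
  | dia : MuForm P → MuForm P
  | box : MuForm P → MuForm P
  | nu : MuForm P → MuForm P
  | mu : MuForm P → MuForm P

/-- A Kripke model on the set of worlds `W` with propositional constants `P`. -/
structure KModel (W P : Type) where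
  rel : W → W → Prop
  val : P → Set W

/-- Extend an environment for de Bruijn fixed-point variables. -/
def envCons {W : Type} (X : Set W) (e : Nat → Set W) : Nat → Set W
  | 0 => X
  | n + 1 => e n

/-- Kripke semantics of the μ-calculus: `‖◇φ‖ = ‖φ‖↓`, `μ`/`ν` are least/greatest
fixed points; a named variable `x_{νx.φ}` is semantically interpreted as `νx.φ`
(so that satisfaction of a formula of `Σ` is satisfaction of its closed form `⌊φ⌋`). -/
def MuForm.sat {W P : Type} (M : KModel W P) : MuForm P → (Nat → Set W) → Set W
  | .tru, _ => Set.univ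
  | .var n, e => e n
  | .prop p, _ => M.val p
  | .nprop p, _ => (M.val p)ᶜ
  | .fvar b ψ, e =>
      if b then ⋃₀ {X : Set W | X ⊆ MuForm.sat M ψ (envCons X e)}
      else ⋂₀ {X : Set W | MuForm.sat M ψ (envCons X e) ⊆ X}
  | .nfvar b ψ, e =>
      (if b then ⋃₀ {X : Set W | X ⊆ MuForm.sat M ψ (envCons X e)}
       else ⋂₀ {X : Set W | MuForm.sat M ψ (envCons X e) ⊆ X})ᶜ
  | .and φ ψ, e => MuForm.sat M φ e ∩ MuForm.sat M ψ e
  | .or φ ψ, e => MuForm.sat M φ e ∪ MuForm.sat M ψ e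
  | .dia φ, e => {w | ∃ u, M.rel w u ∧ u ∈ MuForm.sat M φ e}
  | .box φ, e => {w | ∀ u, M.rel w u → u ∈ MuForm.sat M φ e}
  | .nu φ, e => ⋃₀ {X : Set W | X ⊆ MuForm.sat M φ (envCons X e)}
  | .mu φ, e => ⋂₀ {X : Set W | MuForm.sat M φ (envCons X e) ⊆ X}

/-- `w ⊨_M φ` (for sentences; fixed-point variables get the empty valuation). -/
def KModel.Sat {W P : Type} (M : KModel W P) (w : W) (φ : MuForm P) : Prop :=
  w ∈ φ.sat M (fun _ => (∅ : Set W))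

/-- `⊑`, the reflexive closure of the accessibility relation. -/
def KModel.rle {W P : Type} (M : KModel W P) (u v : W) : Prop :=
  u = v ∨ M.rel u v

/-- A relation is weakly transitive iff `a ⊏ b ⊏ c` with `a ≠ c` implies `a ⊏ c`. -/
def WeaklyTransitive {W : Type} (r : W → W → Prop) : Prop :=
  ∀ a b c, a ≠ c → r a b → r b c → r a c

/-- Negation, defined classically on negation normal forms
(`¬νx.φ(x) := μx.¬φ(¬x)`, `¬μx.φ(x) := νx.¬φ(¬x)`); `¬⊤` is the contradictory `μx.x`. -/
def MuForm.neg {P : Type} : MuForm P → MuForm P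
  | .tru => .mu (.var 0)
  | .var n => .var n
  | .prop p => .nprop p
  | .nprop p => .prop p
  | .fvar b ψ => .nfvar b ψ
  | .nfvar b ψ => .fvar b ψ
  | .and φ ψ => .or φ.neg ψ.neg
  | .or φ ψ => .and φ.neg ψ.neg
  | .dia φ => .box φ.neg
  | .box φ => .dia φ.neg
  | .nu φ => .mu φ.neg
  | .mu φ => .nu φ.neg

/-- `⋄̇φ := φ ∨ ◇φ`. -/
def dotDia {P : Type} (φ : MuForm P) : MuForm P := .or φ (.dia φ)

/-- `⊡φ := φ ∧ □φ`. -/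
def dotBox {P : Type} (φ : MuForm P) : MuForm P := .and φ (.box φ)

end TangledMu
namespace TangledMu

/-- Substitute the de Bruijn variable `k` by the (closed) formula `t`,
lowering the indices of the variables above `k`. -/
def MuForm.inst {P : Type} (t : MuForm P) : Nat → MuForm P → MuForm P
  | _, .tru => .tru
  | k, .var n => if n = k then t else if k < n then .var (n - 1) else .var n
  | _, .prop p => .prop p
  | _, .nprop p => .nprop p
  | _, .fvar b ψ => .fvar b ψ
  | _, .nfvar b ψ => .nfvar b ψ
  | k, .and φ ψ => .and (MuForm.inst t k φ) (MuForm.inst t k ψ)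
  | k, .or φ ψ => .or (MuForm.inst t k φ) (MuForm.inst t k ψ)
  | k, .dia φ => .dia (MuForm.inst t k φ)
  | k, .box φ => .box (MuForm.inst t k φ)
  | k, .nu φ => .nu (MuForm.inst t (k + 1) φ)
  | k, .mu φ => .mu (MuForm.inst t (k + 1) φ)

/-- One step of the modified subformula operator `sub*`: `SubStep ψ φ` says that
`ψ` is an immediate modified subformula of `φ`.  For `νx.φ` (resp. `μx.φ`) the
immediate modified subformula is `φ(x_{νx.φ})`, the body with the bound variable
replaced by the fresh variable named after the fixed-point formula; `⋄̇σ` and `⊡σ`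
have `σ` as their only immediate modified subformula. -/
inductive SubStep {P : Type} : MuForm P → MuForm P → Prop
  | and_left (φ ψ : MuForm P) : ψ ≠ .box φ → SubStep φ (.and φ ψ)
  | and_right (φ ψ : MuForm P) : ψ ≠ .box φ → SubStep ψ (.and φ ψ)
  | or_left (φ ψ : MuForm P) : ψ ≠ .dia φ → SubStep φ (.or φ ψ)
  | or_right (φ ψ : MuForm P) : ψ ≠ .dia φ → SubStep ψ (.or φ ψ)
  | dotdia (φ : MuForm P) : SubStep φ (dotDia φ)
  | dotbox (φ : MuForm P) : SubStep φ (dotBox φ)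
  | dia (φ : MuForm P) : SubStep φ (.dia φ)
  | box (φ : MuForm P) : SubStep φ (.box φ)
  | nu (φ : MuForm P) : SubStep (MuForm.inst (.fvar true φ) 0 φ) (.nu φ)
  | mu (φ : MuForm P) : SubStep (MuForm.inst (.fvar false φ) 0 φ) (.mu φ)

/-- `Σ` is closed under the modified subformula operator `sub*`. -/
def SubstarClosed {P : Type} (S : Set (MuForm P)) : Prop :=
  ∀ φ ∈ S, ∀ ψ, SubStep ψ φ → ψ ∈ S

/-- `Σ` is closed under negation. -/
def NegClosed {P : Type} (S : Set (MuForm P)) : Prop :=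
  ∀ φ ∈ S, MuForm.neg φ ∈ S

/-- `Σ` is closed under `⋄̇`. -/
def DotDiaClosed {P : Type} (S : Set (MuForm P)) : Prop :=
  ∀ φ ∈ S, dotDia φ ∈ S

/-- A cluster: a set of worlds any two of which are related by `⊑`. -/
def IsCluster {W P : Type} (M : KModel W P) (C : Set W) : Prop :=
  ∀ u ∈ C, ∀ v ∈ C, M.rle u v

/-- `C_w`, the union of all clusters containing `w`. -/
def clusterOf {W P : Type} (M : KModel W P) (w : W) : Set W :=
  ⋃₀ {C : Set W | IsCluster M C ∧ w ∈ C}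

/-- `A ≺ B` iff every `v ∈ B` lies strictly above some `u ∈ A`. -/
def Prec {W P : Type} (M : KModel W P) (A B : Set W) : Prop :=
  ∀ v ∈ B, ∃ u ∈ A, M.rel u v ∧ ¬ M.rel v u

/-- `A ⪯ B` iff every `v ∈ B` lies `⊑`-above some `u ∈ A`. -/
def PrecEq {W P : Type} (M : KModel W P) (A B : Set W) : Prop :=
  ∀ v ∈ B, ∃ u ∈ A, M.rle u v

/-- `A↑*`, the reflexive upset of `A`. -/
def upStar {W P : Type} (M : KModel W P) (A : Set W) : Set W :=
  A ∪ {v | ∃ u ∈ A, M.rel u v}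

/-- `w` is `Σ`-final in `M`. -/
def FinalPt {W P : Type} (M : KModel W P) (S : Set (MuForm P)) (w : W) : Prop :=
  ∃ φ ∈ S, M.Sat w φ ∧ ∀ u, M.rel w u → M.Sat u φ → M.rel u w

/-- `M^Σ`, the largest `Σ`-final subset of `M` (the set of all `Σ`-final points). -/
def finalSet {W P : Type} (M : KModel W P) (S : Set (MuForm P)) : Set W :=
  {w | FinalPt M S w}

/-- `DepthGe M Σ n A` says `dpt_Σ^M(A) ≥ n`: there is a `≺`-increasing chain of `n`
nonempty subsets of `M^Σ` above `A`. -/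
def DepthGe {W P : Type} (M : KModel W P) (S : Set (MuForm P)) : Nat → Set W → Prop
  | 0, _ => True
  | n + 1, A => ∃ B : Set W, B.Nonempty ∧ B ⊆ finalSet M S ∧ Prec M A B ∧ DepthGe M S n B

/-- `dpt_Σ^M(A) = n`. -/
def depthEq {W P : Type} (M : KModel W P) (S : Set (MuForm P)) (A : Set W) (n : Nat) : Prop :=
  DepthGe M S n A ∧ ¬ DepthGe M S (n + 1) A

/-- `w ⊨_M ⟨n⟩̄φ`: some `Σ`-final `v ⊒ w` of `Σ`-depth `n` satisfies `φ`. -/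
def BarSat {W P : Type} (M : KModel W P) (S : Set (MuForm P)) (w : W) (n : Nat)
    (φ : MuForm P) : Prop :=
  ∃ v, FinalPt M S v ∧ M.rle w v ∧ depthEq M S {v} n ∧ M.Sat v φ

/-- Propositional constants occurring in a formula. -/
def MuForm.props {P : Type} : MuForm P → Set P
  | .tru => ∅
  | .var _ => ∅
  | .prop p => {p}
  | .nprop p => {p}
  | .fvar _ ψ => ψ.props
  | .nfvar _ ψ => ψ.props
  | .and φ ψ => φ.props ∪ ψ.props
  | .or φ ψ => φ.props ∪ ψ.props
  | .dia φ => φ.props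
  | .box φ => φ.props
  | .nu φ => φ.props
  | .mu φ => φ.props

/-- The propositional constants occurring in some formula of `Σ`. -/
def SigmaProps {P : Type} (S : Set (MuForm P)) : Set P :=
  {p | ∃ φ ∈ S, p ∈ φ.props}

end TangledMu
namespace TangledMu

/-- `Cl_{⋄̇, sub*, ¬}(S)`: the least set of formulas containing `S` and closed under
`⋄̇`, under modified subformulas and under negation. -/
inductive InCl {P : Type} (S : Set (MuForm P)) : MuForm P → Prop
  | base {φ} : φ ∈ S → InCl S φ
  | dot {φ} : InCl S φ → InCl S (dotDia φ)
  | sub {φ ψ} : InCl S φ → SubStep ψ φ → InCl S ψ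
  | neg {φ} : InCl S φ → InCl S (MuForm.neg φ)

end TangledMu

namespace TangledMu

/-! ### Auxiliary development -/

section Aux

variable {P : Type}

/-- Closure under `sub*` and negation only (no `⋄̇`). -/
inductive InC0 (S0 : Set (MuForm P)) : MuForm P → Prop
  | base {φ} : φ ∈ S0 → InC0 S0 φ
  | neg {φ} : InC0 S0 φ → InC0 S0 (MuForm.neg φ)
  | sub {φ ψ} : InC0 S0 φ → SubStep ψ φ → InC0 S0 ψ

/-- A size measure: `⊤` has size 2 so that negation is size-preserving;
`fvar`/`nfvar` are leaves. -/
def msz : MuForm P → Nat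
  | .tru => 2
  | .var _ => 1
  | .prop _ => 1
  | .nprop _ => 1
  | .fvar _ _ => 1
  | .nfvar _ _ => 1
  | .and φ ψ => msz φ + msz ψ + 1
  | .or φ ψ => msz φ + msz ψ + 1
  | .dia φ => msz φ + 1
  | .box φ => msz φ + 1
  | .nu φ => msz φ + 1
  | .mu φ => msz φ + 1

lemma msz_neg (φ : MuForm P) : msz (MuForm.neg φ) = msz φ := by
  induction φ <;> simp [MuForm.neg, msz, *]

lemma msz_inst (t : MuForm P) (ht : msz t = 1) :
    ∀ (φ : MuForm P) (k : Nat), msz (MuForm.inst t k φ) = msz φ := by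
  intro φ
  induction φ with
  | var n =>
      intro k
      simp only [MuForm.inst]
      split
      · simp [msz, ht]
      · split <;> rfl
  | tru => intro k; rfl
  | prop p => intro k; rfl
  | nprop p => intro k; rfl
  | fvar b ψ _ => intro k; rfl
  | nfvar b ψ _ => intro k; rfl
  | and φ ψ IH1 IH2 => intro k; simp [MuForm.inst, msz, IH1, IH2]
  | or φ ψ IH1 IH2 => intro k; simp [MuForm.inst, msz, IH1, IH2]
  | dia φ IH => intro k; simp [MuForm.inst, msz, IH]
  | box φ IH => intro k; simp [MuForm.inst, msz, IH]
  | nu φ IH => intro k; simp [MuForm.inst, msz, IH]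
  | mu φ IH => intro k; simp [MuForm.inst, msz, IH]

lemma substep_msz_lt {φ ψ : MuForm P} (h : SubStep ψ φ) : msz ψ < msz φ := by
  cases h <;>
    simp [msz, dotDia, dotBox, msz_inst _ (by simp [msz] : msz (MuForm.fvar true _) = 1),
      msz_inst _ (by simp [msz] : msz (MuForm.fvar false _) = 1)] <;> omega

lemma neg4 (φ : MuForm P) :
    φ.neg.neg.neg.neg = φ.neg.neg := by
  induction φ <;> simp [MuForm.neg, *]

/-- Candidate immediate `sub*`-predecessors. -/
def cands : MuForm P → Set (MuForm P)
  | .and a b => {a, b}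
  | .or a b => {a, b}
  | .dia a => {a}
  | .box a => {a}
  | .nu a => {MuForm.inst (.fvar true a) 0 a}
  | .mu a => {MuForm.inst (.fvar false a) 0 a}
  | _ => ∅

lemma substep_mem_cands {φ ψ : MuForm P} (h : SubStep ψ φ) : ψ ∈ cands φ := by
  cases h <;> simp [cands, dotDia, dotBox]

lemma cands_finite (φ : MuForm P) : (cands φ).Finite := by
  cases φ <;> simp [cands]

/-- Every formula generates a finite set closed under negation and `sub*`. -/
lemma exists_closed : ∀ (n : Nat) (φ : MuForm P), msz φ ≤ n →
    ∃ R : Set (MuForm P), R.Finite ∧ φ ∈ R ∧ (∀ χ ∈ R, χ.neg ∈ R) ∧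
      (∀ χ ∈ R, ∀ ψ, SubStep ψ χ → ψ ∈ R) := by
  intro n
  induction n using Nat.strong_induction_on with
  | _ n IH =>
    intro φ hφ
    classical
    set O : Set (MuForm P) := {φ, φ.neg, φ.neg.neg, φ.neg.neg.neg} with hO
    have hO_msz : ∀ χ ∈ O, msz χ = msz φ := by
      intro χ hχ
      rcases hχ with h | h | h | h <;> subst h <;> simp [msz_neg]
    have hO_neg : ∀ χ ∈ O, χ.neg ∈ O := by
      intro χ hχ
      simp only [hO, Set.mem_insert_iff, Set.mem_singleton_iff] at hχ ⊢
      rcases hχ with h | h | h | h <;> subst h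
      · exact Or.inr (Or.inl rfl)
      · exact Or.inr (Or.inr (Or.inl rfl))
      · exact Or.inr (Or.inr (Or.inr rfl))
      · exact Or.inr (Or.inr (Or.inl (neg4 φ)))
    have hO_fin : O.Finite := by
      rw [hO]
      exact (((Set.finite_singleton _).insert _).insert _).insert _
    set Pr : Set (MuForm P) := {ψ | ∃ χ ∈ O, SubStep ψ χ} with hPrdef
    have hPr_fin : Pr.Finite := by
      have hsub : Pr ⊆ cands φ ∪ cands φ.neg ∪ cands φ.neg.neg ∪ cands φ.neg.neg.neg := by
        rintro ψ ⟨χ, hχ, hs⟩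
        have hc := substep_mem_cands hs
        rcases hχ with h | h | h | h <;> subst h <;> simp [hc]
      exact Set.Finite.subset
        ((((cands_finite _).union (cands_finite _)).union (cands_finite _)).union
          (cands_finite _)) hsub
    have hrec : ∀ ψ : MuForm P, ∃ R : Set (MuForm P), R.Finite ∧
        (ψ ∈ Pr → ψ ∈ R ∧ (∀ χ ∈ R, χ.neg ∈ R) ∧ (∀ χ ∈ R, ∀ ψ', SubStep ψ' χ → ψ' ∈ R)) := by
      intro ψ
      by_cases hψ : ψ ∈ Pr
      · obtain ⟨χ, hχ, hs⟩ := hψ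
        have hlt : msz ψ < n := by
          have h1 : msz ψ < msz χ := substep_msz_lt hs
          have h2 : msz χ = msz φ := hO_msz χ hχ
          omega
        obtain ⟨R, h1, h2, h3, h4⟩ := IH (msz ψ) hlt ψ le_rfl
        exact ⟨R, h1, fun _ => ⟨h2, h3, h4⟩⟩
      · exact ⟨∅, Set.finite_empty, fun h => absurd h hψ⟩
    choose F hF1 hF2 using hrec
    refine ⟨O ∪ ⋃ ψ ∈ Pr, F ψ, ?_, ?_, ?_, ?_⟩
    · exact hO_fin.union (hPr_fin.biUnion fun ψ _ => hF1 ψ)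
    · left; simp [hO]
    · rintro χ (hχ | hχ)
      · exact Or.inl (hO_neg χ hχ)
      · right
        simp only [Set.mem_iUnion] at hχ ⊢
        obtain ⟨ψ, hψ, hmem⟩ := hχ
        exact ⟨ψ, hψ, ((hF2 ψ hψ).2.1) χ hmem⟩
    · rintro χ (hχ | hχ) ψ' hs
      · have hψ' : ψ' ∈ Pr := ⟨χ, hχ, hs⟩
        right
        simp only [Set.mem_iUnion]
        exact ⟨ψ', hψ', (hF2 ψ' hψ').1⟩
      · right
        simp only [Set.mem_iUnion] at hχ ⊢
        obtain ⟨ψ, hψ, hmem⟩ := hχ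
        exact ⟨ψ, hψ, ((hF2 ψ hψ).2.2) χ hmem ψ' hs⟩

lemma InC0_finite {S0 : Set (MuForm P)} (hfin : S0.Finite) :
    {φ | InC0 S0 φ}.Finite := by
  classical
  have hrec : ∀ σ : MuForm P, ∃ R : Set (MuForm P), R.Finite ∧
      (σ ∈ S0 → σ ∈ R ∧ (∀ χ ∈ R, χ.neg ∈ R) ∧ (∀ χ ∈ R, ∀ ψ, SubStep ψ χ → ψ ∈ R)) := by
    intro σ
    by_cases hσ : σ ∈ S0
    · obtain ⟨R, h1, h2, h3, h4⟩ := exists_closed (msz σ) σ le_rfl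
      exact ⟨R, h1, fun _ => ⟨h2, h3, h4⟩⟩
    · exact ⟨∅, Set.finite_empty, fun h => absurd h hσ⟩
  choose F hF1 hF2 using hrec
  have hU : (⋃ σ ∈ S0, F σ).Finite := hfin.biUnion fun σ _ => hF1 σ
  refine hU.subset ?_
  intro φ hφ
  induction hφ with
  | base h =>
      simp only [Set.mem_iUnion]
      exact ⟨_, h, (hF2 _ h).1⟩
  | neg h IHh =>
      simp only [Set.mem_iUnion] at IHh ⊢
      obtain ⟨σ, hσ, hm⟩ := IHh
      exact ⟨σ, hσ, (hF2 σ hσ).2.1 _ hm⟩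
  | sub h hs IHh =>
      simp only [Set.mem_iUnion] at IHh ⊢
      obtain ⟨σ, hσ, hm⟩ := IHh
      exact ⟨σ, hσ, (hF2 σ hσ).2.2 _ hm _ hs⟩

/-! ### Modal words -/

/-- Apply a word over `{⋄̇, ⊡}` to a formula (`true = ⋄̇`, `false = ⊡`). -/
def wApp : List Bool → MuForm P → MuForm P
  | [], ψ => ψ
  | true :: w, ψ => dotDia (wApp w ψ)
  | false :: w, ψ => dotBox (wApp w ψ)

/-- Build a word over `{⋄̇, ⊡}` on top of a formula, using `¬⋄̇¬` in place of `⊡`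
(so that the result stays in the closure). -/
def buildR : List Bool → MuForm P → MuForm P
  | [], ψ => ψ
  | true :: w, ψ => dotDia (buildR w ψ)
  | false :: w, ψ => MuForm.neg (dotDia (MuForm.neg (buildR w ψ)))

lemma neg_wApp (w : List Bool) (ψ : MuForm P) :
    MuForm.neg (wApp w ψ) = wApp (w.map (fun b => !b)) (MuForm.neg ψ) := by
  induction w with
  | nil => rfl
  | cons a w IHw =>
      cases a <;> simp [wApp, dotDia, dotBox, MuForm.neg, IHw]

lemma substep_or_dia {χ σ : MuForm P} (h : SubStep χ (.or σ (.dia σ))) : χ = σ := by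
  generalize hE : MuForm.or σ (.dia σ) = θ at h
  cases h with
  | or_left φ ψ hne =>
      injection hE with h1 h2
      subst h1
      exact absurd h2.symm hne
  | or_right φ ψ hne =>
      injection hE with h1 h2
      subst h1
      exact absurd h2.symm hne
  | dotdia φ =>
      simp only [dotDia] at hE
      injection hE with h1 h2
      exact h1.symm
  | and_left φ ψ hne => cases hE
  | and_right φ ψ hne => cases hE
  | dotbox φ => simp only [dotBox] at hE; cases hE
  | dia φ => cases hE
  | box φ => cases hE
  | nu φ => cases hE
  | mu φ => cases hE

lemma substep_and_box {χ σ : MuForm P} (h : SubStep χ (.and σ (.box σ))) : χ = σ := by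
  generalize hE : MuForm.and σ (.box σ) = θ at h
  cases h with
  | and_left φ ψ hne =>
      injection hE with h1 h2
      subst h1
      exact absurd h2.symm hne
  | and_right φ ψ hne =>
      injection hE with h1 h2
      subst h1
      exact absurd h2.symm hne
  | dotbox φ =>
      simp only [dotBox] at hE
      injection hE with h1 h2
      exact h1.symm
  | or_left φ ψ hne => cases hE
  | or_right φ ψ hne => cases hE
  | dotdia φ => simp only [dotDia] at hE; cases hE
  | dia φ => cases hE
  | box φ => cases hE
  | nu φ => cases hE
  | mu φ => cases hE

lemma InC0_InCl {S0 : Set (MuForm P)} {φ : MuForm P} (h : InC0 S0 φ) : InCl S0 φ := by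
  induction h with
  | base h => exact .base h
  | neg _ IHh => exact .neg IHh
  | sub _ hs IHh => exact .sub IHh hs

lemma InCl_decomp {S0 : Set (MuForm P)} {φ : MuForm P} (h : InCl S0 φ) :
    ∃ w ψ, InC0 S0 ψ ∧ φ = wApp w ψ := by
  induction h with
  | base h => exact ⟨[], _, .base h, rfl⟩
  | dot _ IHh =>
      obtain ⟨w, ψ, h1, rfl⟩ := IHh
      exact ⟨true :: w, ψ, h1, rfl⟩
  | sub hφ hs IHh =>
      rename_i φ0 χ
      obtain ⟨w, ψ, h1, rfl⟩ := IHh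
      cases w with
      | nil =>
          simp only [wApp] at hs
          exact ⟨[], χ, .sub h1 hs, rfl⟩
      | cons a w' =>
          cases a
          · simp only [wApp] at hs
            simp only [dotBox] at hs
            exact ⟨w', ψ, h1, substep_and_box hs⟩
          · simp only [wApp] at hs
            simp only [dotDia] at hs
            exact ⟨w', ψ, h1, substep_or_dia hs⟩
  | neg _ IHh =>
      obtain ⟨w, ψ, h1, rfl⟩ := IHh
      exact ⟨w.map (fun b => !b), ψ.neg, .neg h1, neg_wApp w ψ⟩

lemma InCl_buildR {S0 : Set (MuForm P)} {φ : MuForm P} (h : InCl S0 φ) (w : List Bool) :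
    InCl S0 (buildR w φ) := by
  induction w with
  | nil => exact h
  | cons a w IHw =>
      cases a
      · exact .neg (.dot (.neg IHw))
      · exact .dot IHw

/-! ### Semantics of words -/

variable {W : Type}

/-- Semantic `⋄̇`. -/
def Dm (M : KModel W P) (X : Set W) : Set W :=
  X ∪ {w | ∃ u, M.rel w u ∧ u ∈ X}

/-- Semantic `⊡`. -/
def Bm (M : KModel W P) (X : Set W) : Set W :=
  X ∩ {w | ∀ u, M.rel w u → u ∈ X}

def wSem (M : KModel W P) : List Bool → Set W → Set W
  | [], X => X
  | true :: w, X => Dm M (wSem M w X)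
  | false :: w, X => Bm M (wSem M w X)

lemma compl_Dm (M : KModel W P) (X : Set W) : (Dm M X)ᶜ = Bm M Xᶜ := by
  ext w
  simp only [Dm, Bm, Set.mem_union, Set.mem_setOf_eq, Set.mem_compl_iff, Set.mem_inter_iff,
    not_or, not_exists]
  constructor
  · rintro ⟨h1, h2⟩
    exact ⟨h1, fun u hu hmem => h2 u ⟨hu, hmem⟩⟩
  · rintro ⟨h1, h2⟩
    exact ⟨h1, fun u ⟨hu, hmem⟩ => h2 u hu hmem⟩

lemma compl_Bm (M : KModel W P) (X : Set W) : (Bm M X)ᶜ = Dm M Xᶜ := by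
  have h := compl_Dm M Xᶜ
  rw [compl_compl] at h
  rw [← h, compl_compl]

lemma Dm_mono (M : KModel W P) {X Y : Set W} (h : X ⊆ Y) : Dm M X ⊆ Dm M Y := by
  rintro w (hw | ⟨u, hu1, hu2⟩)
  · exact Or.inl (h hw)
  · exact Or.inr ⟨u, hu1, h hu2⟩

lemma Bm_mono (M : KModel W P) {X Y : Set W} (h : X ⊆ Y) : Bm M X ⊆ Bm M Y := by
  rintro w ⟨hw, hbox⟩
  exact ⟨h hw, fun u hu => h (hbox u hu)⟩

lemma subset_Dm (M : KModel W P) (X : Set W) : X ⊆ Dm M X := Set.subset_union_left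

lemma Bm_subset (M : KModel W P) (X : Set W) : Bm M X ⊆ X := Set.inter_subset_left

lemma Dm_Dm (M : KModel W P) (hM : WeaklyTransitive M.rel) (X : Set W) :
    Dm M (Dm M X) = Dm M X := by
  apply Set.Subset.antisymm
  · rintro w (hw | ⟨u, hwu, hu⟩)
    · exact hw
    · rcases hu with hu | ⟨v, huv, hv⟩
      · exact Or.inr ⟨u, hwu, hu⟩
      · by_cases hwv : w = v
        · exact Or.inl (hwv ▸ hv)
        · exact Or.inr ⟨v, hM w u v hwv hwu huv, hv⟩
  · exact subset_Dm M _

lemma Bm_Bm (M : KModel W P) (hM : WeaklyTransitive M.rel) (X : Set W) :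
    Bm M (Bm M X) = Bm M X := by
  rw [← compl_compl (Bm M (Bm M X)), compl_Bm, compl_Bm, Dm_Dm M hM, ← compl_Bm, compl_compl]

lemma DBDB (M : KModel W P) (hM : WeaklyTransitive M.rel) (X : Set W) :
    Dm M (Bm M (Dm M (Bm M X))) = Dm M (Bm M X) := by
  apply Set.Subset.antisymm
  · intro w hw
    have h1 : Dm M (Bm M (Dm M (Bm M X))) ⊆ Dm M (Dm M (Bm M X)) :=
      Dm_mono M (Bm_subset M _)
    rw [Dm_Dm M hM] at h1
    exact h1 hw
  · apply Dm_mono M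
    have h1 : Bm M X ⊆ Bm M (Bm M X) := (Bm_Bm M hM X).symm.subset
    have h2 : Bm M (Bm M X) ⊆ Bm M (Dm M (Bm M X)) := Bm_mono M (subset_Dm M _)
    exact h1.trans h2

lemma BDBD (M : KModel W P) (hM : WeaklyTransitive M.rel) (X : Set W) :
    Bm M (Dm M (Bm M (Dm M X))) = Bm M (Dm M X) := by
  have e1 : (Dm M (Bm M Xᶜ))ᶜ = Bm M (Dm M X) := by
    rw [compl_Dm, compl_Bm, compl_compl]
  have e2 : (Dm M (Bm M (Dm M (Bm M Xᶜ))))ᶜ = Bm M (Dm M (Bm M (Dm M X))) := by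
    rw [compl_Dm, compl_Bm, compl_Dm, compl_Bm, compl_compl]
  rw [← e2, DBDB M hM, e1]

/-! ### Relating syntax and semantics -/

lemma sat_neg_neg (M : KModel W P) (φ : MuForm P) :
    ∀ e, MuForm.sat M φ.neg.neg e = MuForm.sat M φ e := by
  induction φ with
  | tru =>
      intro e
      show MuForm.sat M (.nu (.var 0)) e = Set.univ
      apply Set.eq_univ_of_univ_subset
      intro w _
      exact ⟨Set.univ, by simp [MuForm.sat, envCons], trivial⟩
  | var n => intro e; rfl
  | prop p => intro e; rfl
  | nprop p => intro e; rfl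
  | fvar b ψ _ => intro e; rfl
  | nfvar b ψ _ => intro e; rfl
  | and φ ψ IH1 IH2 => intro e; simp [MuForm.neg, MuForm.sat, IH1 e, IH2 e]
  | or φ ψ IH1 IH2 => intro e; simp [MuForm.neg, MuForm.sat, IH1 e, IH2 e]
  | dia φ IH => intro e; simp [MuForm.neg, MuForm.sat, IH e]
  | box φ IH => intro e; simp [MuForm.neg, MuForm.sat, IH e]
  | nu φ IH =>
      intro e
      have h : ∀ X : Set W, MuForm.sat M φ.neg.neg (envCons X e) =
          MuForm.sat M φ (envCons X e) := fun X => IH _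
      show MuForm.sat M (.nu φ.neg.neg) e = MuForm.sat M (.nu φ) e
      simp only [MuForm.sat, h]
  | mu φ IH =>
      intro e
      have h : ∀ X : Set W, MuForm.sat M φ.neg.neg (envCons X e) =
          MuForm.sat M φ (envCons X e) := fun X => IH _
      show MuForm.sat M (.mu φ.neg.neg) e = MuForm.sat M (.mu φ) e
      simp only [MuForm.sat, h]

lemma sat_wApp (M : KModel W P) (w : List Bool) (ψ : MuForm P) (e : Nat → Set W) :
    MuForm.sat M (wApp w ψ) e = wSem M w (MuForm.sat M ψ e) := by
  induction w with
  | nil => rfl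
  | cons a w IHw =>
      cases a
      · show MuForm.sat M (.and (wApp w ψ) (.box (wApp w ψ))) e = Bm M (wSem M w _)
        simp only [MuForm.sat, IHw]
        rfl
      · show MuForm.sat M (.or (wApp w ψ) (.dia (wApp w ψ))) e = Dm M (wSem M w _)
        simp only [MuForm.sat, IHw]
        rfl

lemma sat_buildR (M : KModel W P) (w : List Bool) (ψ : MuForm P) (e : Nat → Set W) :
    MuForm.sat M (buildR w ψ) e = wSem M w (MuForm.sat M ψ e) := by
  induction w with
  | nil => rfl
  | cons a w IHw =>
      cases a
      · show MuForm.sat M (MuForm.neg (dotDia (MuForm.neg (buildR w ψ)))) e = Bm M (wSem M w _)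
        show MuForm.sat M (.and (buildR w ψ).neg.neg (.box (buildR w ψ).neg.neg)) e = _
        simp only [MuForm.sat, sat_neg_neg, IHw]
        rfl
      · show MuForm.sat M (.or (buildR w ψ) (.dia (buildR w ψ))) e = Dm M (wSem M w _)
        simp only [MuForm.sat, IHw]
        rfl

/-! ### The seven modalities -/

def L7 : List (List Bool) :=
  [[], [true], [false], [true, false], [false, true], [true, false, true], [false, true, false]]

def push : Bool → List Bool → List Bool
  | true, [] => [true]
  | true, [true] => [true]
  | true, [false] => [true, false]
  | true, [true, false] => [true, false]
  | true, [false, true] => [true, false, true]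
  | true, [true, false, true] => [true, false, true]
  | true, [false, true, false] => [true, false]
  | false, [] => [false]
  | false, [false] => [false]
  | false, [true] => [false, true]
  | false, [false, true] => [false, true]
  | false, [true, false] => [false, true, false]
  | false, [false, true, false] => [false, true, false]
  | false, [true, false, true] => [false, true]
  | a, v => a :: v

def red (w : List Bool) : List Bool := w.foldr push []

lemma push_mem_L7 {v : List Bool} (hv : v ∈ L7) (a : Bool) : push a v ∈ L7 := by
  simp only [L7, List.mem_cons, List.not_mem_nil, or_false] at hv ⊢
  rcases hv with h | h | h | h | h | h | h <;> subst h <;> cases a <;> simp [push]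

lemma push_sem (M : KModel W P) (hM : WeaklyTransitive M.rel) {v : List Bool} (hv : v ∈ L7)
    (a : Bool) (X : Set W) : wSem M (push a v) X = wSem M (a :: v) X := by
  simp only [L7, List.mem_cons, List.not_mem_nil, or_false] at hv
  rcases hv with h | h | h | h | h | h | h <;> subst h <;> cases a <;>
    simp only [push, wSem] <;>
    first
      | rfl
      | exact (Dm_Dm M hM _).symm
      | exact (Bm_Bm M hM _).symm
      | exact (DBDB M hM _).symm
      | exact (BDBD M hM _).symm

lemma red_mem_L7 (w : List Bool) : red w ∈ L7 := by
  induction w with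
  | nil => simp [red, L7]
  | cons a w IHw => exact push_mem_L7 IHw a

lemma red_sem (M : KModel W P) (hM : WeaklyTransitive M.rel) (w : List Bool) (X : Set W) :
    wSem M (red w) X = wSem M w X := by
  induction w with
  | nil => rfl
  | cons a w IHw =>
      show wSem M (push a (red w)) X = wSem M (a :: w) X
      rw [push_sem M hM (red_mem_L7 w) a X]
      cases a <;> simp only [wSem, IHw]

end Aux

end TangledMu

namespace TangledMu

/-- For every finite set `Σ₀ ⊆ L_μ`, the closure
`Σ = Cl_{⋄̇, sub*, ¬}(Σ₀)` contains only finitely many formulas up to semantic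
equivalence over weakly transitive Kripke models: there is a finite set `T ⊆ Σ` of
representatives such that every `φ ∈ Σ` is equivalent, in every weakly transitive
Kripke model (under every environment for the fixed-point variables), to some `ψ ∈ T`. -/
theorem closure_finite_up_to_equivalence {P : Type} (S0 : Set (MuForm P))
    (hfin : S0.Finite) :
    ∃ T : Set (MuForm P), T.Finite ∧ T ⊆ {φ | InCl S0 φ} ∧
      ∀ φ, InCl S0 φ → ∃ ψ ∈ T,
        ∀ (W : Type) (M : KModel W P), WeaklyTransitive M.rel →
          ∀ e : Nat → Set W, MuForm.sat M φ e = MuForm.sat M ψ e := by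
  classical
  have hC : {ψ | InC0 S0 ψ}.Finite := InC0_finite hfin
  have hL : {v : List Bool | v ∈ L7}.Finite := L7.finite_toSet
  refine ⟨(fun p : List Bool × MuForm P => buildR p.1 p.2) ''
      ({v : List Bool | v ∈ L7} ×ˢ {ψ | InC0 S0 ψ}), ?_, ?_, ?_⟩
  · exact Set.Finite.image _ (hL.prod hC)
  · rintro φ ⟨⟨v, ψ⟩, ⟨hv, hψ⟩, rfl⟩
    exact InCl_buildR (InC0_InCl hψ) v
  · intro φ hφ
    obtain ⟨w, ψ, h1, rfl⟩ := InCl_decomp hφ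
    refine ⟨buildR (red w) ψ, ⟨(red w, ψ), ⟨red_mem_L7 w, h1⟩, rfl⟩, ?_⟩
    intro W M hM e
    rw [sat_wApp, sat_buildR, red_sem M hM]


end TangledMu
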